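/- Let J be an m×n matrix of rank r over a field Q, and for index tuples i = (i_1 < ⋯ < i_r) and j = (j_1 < ⋯ < j_r) let Δ(i,j) denote the corresponding r×r minor of J. If i, i' are r-tuples of row indices and j, j' are r-tuples of column indices such that Δ(i,j), Δ(i',j') are both relevant, then Δ(i', j')·Δ(i, j) = Δ(i', j)·Δ(i, j'). -/

import Mathlib

theorem exists_rank_factorization {Q : Type*} [Field Q] {m n r : ℕ}
    (J : Matrix (Fin m) (Fin n) Q) (hrank : J.rank = r) :
    ∃ (C : Matrix (Fin m) (Fin r) Q) (D : Matrix (Fin r) (Fin n) Q), J = C * D := by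
  have h : Module.finrank Q (LinearMap.range J.mulVecLin) = r := hrank
  let b := Module.finBasisOfFinrankEq Q (LinearMap.range J.mulVecLin) h
  refine ⟨fun k l => (b l : Fin m → Q) k,
    fun l p => b.repr ⟨J.mulVecLin (Pi.single p 1), LinearMap.mem_range_self _ _⟩ l, ?_⟩
  ext k p
  have hv : (⟨J.mulVecLin (Pi.single p 1), LinearMap.mem_range_self _ _⟩ :
      LinearMap.range J.mulVecLin) =
      ∑ l, b.repr ⟨J.mulVecLin (Pi.single p 1), LinearMap.mem_range_self _ _⟩ l • b l :=
    (b.sum_repr _).symm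
  have hv' := congrArg (fun v : LinearMap.range J.mulVecLin => (v : Fin m → Q) k) hv
  simp only [Submodule.coe_sum, Submodule.coe_smul, Finset.sum_apply, Pi.smul_apply,
    smul_eq_mul] at hv'
  have hJ : J.mulVecLin (Pi.single p 1) k = J k p := by
    simp [Matrix.mulVecLin, Matrix.mulVec_single]
  rw [hJ] at hv'
  rw [hv']
  simp [Matrix.mul_apply, mul_comm]
  rfl

/-- For an `m×n` matrix `J` of rank `r` over a field, the `r×r` minors satisfy
`Δ(i',j')·Δ(i,j) = Δ(i',j)·Δ(i,j')` for all `r`-tuples of row indices `i, i'`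
and column indices `j, j'`. -/
theorem stmt_7 {Q : Type*} [Field Q] {m n r : ℕ}
    (J : Matrix (Fin m) (Fin n) Q) (hrank : J.rank = r)
    (i i' : Fin r → Fin m) (j j' : Fin r → Fin n)
    (hi : StrictMono i) (hi' : StrictMono i')
    (hj : StrictMono j) (hj' : StrictMono j') :
    (J.submatrix i' j').det * (J.submatrix i j).det =
      (J.submatrix i' j).det * (J.submatrix i j').det := by
  obtain ⟨C, D, rfl⟩ := exists_rank_factorization J hrank
  have key : ∀ (a : Fin r → Fin m) (b : Fin r → Fin n),
      ((C * D).submatrix a b).det = (C.submatrix a id).det * (D.submatrix id b).det := by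
    intro a b
    have h2 : (C * D).submatrix a b = C.submatrix a id * D.submatrix id b := by
      ext x y
      simp [Matrix.mul_apply]
    rw [h2, Matrix.det_mul]
  rw [key, key, key, key]
  ring
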